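/- Let c, p, q ∈ R^d with ‖c - p‖ ≤ r = ‖c - q‖ and suppose the angle ∠(p c q) = φ ≤ 1/2. Let q' be the nearest point to q on segment[c, p], and suppose q' ≠ p (the nearest point is interior or c). Let β = ∠(q p c). Then β ≥ π/2 − φ/2. -/
import Mathlib


open Metric EuclideanGeometry Real

set_option maxHeartbeats 1000000 in
/-- in a triangle `c, p, q` with `‖c - p‖ ≤ r = ‖c - q‖`, angle
`φ = ∠ p c q ≤ 1/2`, if the nearest point `q'` to `q` on `segment[c, p]` is not
`p`, then the angle `β = ∠ q p c` satisfies `β ≥ π/2 - φ/2`. -/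
theorem stmt_12 (d : ℕ) (c p q q' : EuclideanSpace ℝ (Fin d)) (r : ℝ)
    (hr : r = dist c q) (hrpos : 0 < r) (hcp : dist c p ≤ r) (hpc : p ≠ c)
    (hφ : ∠ p c q ≤ 1 / 2)
    (hq'mem : q' ∈ segment ℝ c p)
    (hq' : dist q q' = infDist q (segment ℝ c p))
    (hq'p : q' ≠ p) :
    π / 2 - ∠ p c q / 2 ≤ ∠ q p c := by
  -- first, q ≠ p
  have hqp : q ≠ p := by
    rintro rfl
    have hmem : q ∈ segment ℝ c q := right_mem_segment ℝ c q
    have h0 : infDist q (segment ℝ c q) = 0 := by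
      exact infDist_zero_of_mem hmem
    rw [h0, dist_eq_zero] at hq'
    exact hq'p hq'.symm
  set φ := ∠ p c q with hφdef
  set β := ∠ q p c with hβdef
  have hφ0 : 0 ≤ φ := angle_nonneg _ _ _
  have hφπ : φ ≤ π := angle_le_pi _ _ _
  have hβ0 : 0 ≤ β := angle_nonneg _ _ _
  have hβπ : β ≤ π := angle_le_pi _ _ _
  set a := dist c p with hadef
  set m := dist p q with hmdef
  have ha : 0 < a := dist_pos.mpr (Ne.symm hpc)
  have hm : 0 < m := dist_pos.mpr (Ne.symm hqp)
  -- law of cosines at c : m² = a² + r² - 2 a r cos φ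
  have lawc : m ^ 2 = a ^ 2 + r ^ 2 - 2 * a * r * Real.cos φ := by
    have := EuclideanGeometry.law_cos p c q
    rw [dist_comm p q, dist_comm p c, dist_comm q c, ← hr] at this
    rw [hmdef, dist_comm p q]
    linarith [this]
  -- law of cosines at p : r² = m² + a² - 2 m a cos β
  have lawp : r ^ 2 = m ^ 2 + a ^ 2 - 2 * m * a * Real.cos β := by
    have := EuclideanGeometry.law_cos q p c
    rw [dist_comm q c, ← hr, dist_comm q p, ← hmdef, ← hadef] at this
    linarith [this]
  set s := Real.sin (φ / 2) with hsdef
  have hs0 : 0 ≤ s := Real.sin_nonneg_of_nonneg_of_le_pi (by linarith) (by linarith)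
  have hs1 : s ≤ 1 := Real.sin_le_one _
  have hcosφ : Real.cos φ = 1 - 2 * s ^ 2 := by
    have := Real.sin_sq_eq_half_sub (φ / 2)
    rw [show 2 * (φ / 2) = φ by ring] at this
    rw [hsdef]; linarith
  -- key: cos β ≤ s
  have hkey : Real.cos β ≤ s := by
    have hδ : 0 ≤ r - a := by linarith
    have hcosβ : 2 * m * a * Real.cos β = 2 * a * (a - r + 2 * r * s ^ 2) := by
      rw [hcosφ] at lawc; nlinarith [lawc, lawp]
    by_cases hcase : a - r + 2 * r * s ^ 2 ≤ 0
    · -- cos β ≤ 0 ≤ s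
      nlinarith [hcosβ, mul_pos hm ha]
    · push_neg at hcase
      -- squared inequality : (a - r + 2 r s²)² ≤ (m s)²
      have hm2 : m ^ 2 = (r - a) ^ 2 + 4 * a * r * s ^ 2 := by
        rw [hcosφ] at lawc; ring_nf; ring_nf at lawc; linarith
      have hident : (m * s) ^ 2 - (a - r + 2 * r * s ^ 2) ^ 2
          = (r - a) * (1 - s ^ 2) * (4 * r * s ^ 2 - (r - a)) := by
        linear_combination s ^ 2 * hm2
      have hprod : 0 ≤ (r - a) * (1 - s ^ 2) * (4 * r * s ^ 2 - (r - a)) := by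
        have h1s : 0 ≤ 1 - s ^ 2 := by nlinarith [hs0, hs1]
        have h2 : 0 ≤ r * s ^ 2 := mul_nonneg hrpos.le (sq_nonneg s)
        apply mul_nonneg (mul_nonneg hδ h1s)
        linarith
      have hsq : (a - r + 2 * r * s ^ 2) ^ 2 ≤ (m * s) ^ 2 := by linarith
      have hms : 0 ≤ m * s := mul_nonneg hm.le hs0
      have hle : a - r + 2 * r * s ^ 2 ≤ m * s := by nlinarith [hsq, hms, hcase]
      have h2a : (0:ℝ) < 2 * m * a := by positivity
      have h1 : 2 * m * a * Real.cos β ≤ 2 * m * a * s := by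
        rw [hcosβ]
        calc 2 * a * (a - r + 2 * r * s ^ 2) ≤ 2 * a * (m * s) := by nlinarith [hle, ha]
          _ = 2 * m * a * s := by ring
      nlinarith [h1, h2a]
  -- conclude via arccos
  have harccos : Real.arccos s ≤ Real.arccos (Real.cos β) := by
    rw [Real.arccos, Real.arccos]
    have := Real.monotone_arcsin hkey
    linarith
  rw [Real.arccos_cos hβ0 hβπ] at harccos
  have : Real.arccos s = π / 2 - φ / 2 := by
    rw [Real.arccos_eq_pi_div_two_sub_arcsin, hsdef,
      Real.arcsin_sin (by linarith) (by linarith)]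
  linarith
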